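/- Reduction of K_u-satisfiability to one-variable counting-free QK^dec-satisfiability: let φ be a propositional bimodal formula of K_u. Associate with each propositional variable p_k of φ a unary predicate P_k, fix fresh unary predicates S, T, and a fresh unary predicate Q_ψ for each ψ ∈ sub(φ), and define the translation ·^† by: p_k^† = P_k(x), (¬ψ)^† = ¬ψ^†, (ψ₁∧ψ₂)^† = ψ₁^† ∧ ψ₂^†, (◇ψ)^† = ◇(S(x) ∧ ∃x(T(x) ∧ Q_ψ(x))), and (◇_uψ)^† = ∃x ψ^†. Let ζ := ⋀_{ψ∈sub(φ)} ∀x(ψ^† → □Q_ψ(x)) ∧ ⋀_{ψ∈sub(φ)} ∀x(◇Q_ψ(x) → ψ^†). Then φ is satisfiable with respect to K_u if and only if ζ ∧ φ^† is satisfiable with respect to QK^dec. (Note that ζ ∧ φ^† uses only the quantifiers ∃x and ∀x, i.e., it lies in the counting-free one-variable fragment.) -/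

import Mathlib

/-! Syntax of one-variable first-order modal formulas with counting quantifiers:
    φ ::= P(x) | ¬φ | (φ∧φ) | ◇φ | ∃[≤c]x φ. -/

inductive Fml : Type
  | atom : ℕ → Fml
  | neg : Fml → Fml
  | conj : Fml → Fml → Fml
  | dia : Fml → Fml
  | countLe : ℕ → Fml → Fml
deriving DecidableEq

namespace Fml

/-- Subformulas. -/
def sub : Fml → Finset Fml
  | atom n => {atom n}
  | neg ψ => insert (neg ψ) ψ.sub
  | conj ψ χ => insert (conj ψ χ) (ψ.sub ∪ χ.sub)
  | dia ψ => insert (dia ψ) ψ.sub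
  | countLe c ψ => insert (countLe c ψ) ψ.sub

/-- Modal depth. -/
def md : Fml → ℕ
  | atom _ => 0
  | neg ψ => ψ.md
  | conj ψ χ => max ψ.md χ.md
  | dia ψ => ψ.md + 1
  | countLe _ ψ => ψ.md

/-- Capacity: the largest counting-quantifier subscript (0 if none). -/
def cpt : Fml → ℕ
  | atom _ => 0
  | neg ψ => ψ.cpt
  | conj ψ χ => max ψ.cpt χ.cpt
  | dia ψ => ψ.cpt
  | countLe c ψ => max c ψ.cpt

/-- Length of the formula as a string, counting subscripts written in binary. -/
def len : Fml → ℕ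
  | atom _ => 1
  | neg ψ => ψ.len + 1
  | conj ψ χ => ψ.len + χ.len + 1
  | dia ψ => ψ.len + 1
  | countLe c ψ => ψ.len + Nat.size c + 1

/-- Predicate symbols occurring in a formula. -/
def preds : Fml → Finset ℕ
  | atom n => {n}
  | neg ψ => ψ.preds
  | conj ψ χ => ψ.preds ∪ χ.preds
  | dia ψ => ψ.preds
  | countLe _ ψ => ψ.preds

def imp (ψ χ : Fml) : Fml := neg (conj ψ (neg χ))
def or (ψ χ : Fml) : Fml := neg (conj (neg ψ) (neg χ))
def iff (ψ χ : Fml) : Fml := conj (ψ.imp χ) (χ.imp ψ)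
def box (ψ : Fml) : Fml := neg (dia (neg ψ))
/-- `∃x ψ := ¬∃[≤0]x ψ`. -/
def ex (ψ : Fml) : Fml := neg (countLe 0 ψ)
/-- `∀x ψ := ∃[≤0]x ¬ψ`. -/
def fal (ψ : Fml) : Fml := countLe 0 (neg ψ)
/-- A tautology. -/
def top : Fml := neg (conj (atom 0) (neg (atom 0)))

/-- `boxIter n ψ` is `□^n ψ`. -/
def boxIter : ℕ → Fml → Fml
  | 0, ψ => ψ
  | n+1, ψ => (boxIter n ψ).box

/-- `boxLe m ψ` is `⋀_{k=0}^{m} □^k ψ`. -/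
def boxLe : ℕ → Fml → Fml
  | 0, ψ => ψ
  | n+1, ψ => conj (boxLe n ψ) (boxIter (n+1) ψ)

end Fml

/-- A first-order Kripke model `M = (W,R,D,d,I)` (unary predicates suffice for the
one-variable fragment). -/
structure KModel where
  W : Type
  R : W → W → Prop
  D : Type
  Dne : Nonempty D
  dom : W → Set D
  domNe : ∀ w, (dom w).Nonempty
  I : W → ℕ → Set D
  Isub : ∀ w p, I w p ⊆ dom w

/-- Satisfaction `M,w ⊨^a φ`. -/
def KModel.sat (M : KModel) : Fml → M.W → M.D → Prop
  | .atom p, w, a => a ∈ M.I w p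
  | .neg ψ, w, a => ¬ M.sat ψ w a
  | .conj ψ χ, w, a => M.sat ψ w a ∧ M.sat χ w a
  | .dia ψ, w, a => ∃ v, M.R w v ∧ M.sat ψ v a
  | .countLe c ψ, w, _ => {b | b ∈ M.dom w ∧ M.sat ψ w b}.encard ≤ (c : ℕ∞)

def KModel.constDom (M : KModel) : Prop := ∀ u v, M.dom u = M.dom v
def KModel.expDom (M : KModel) : Prop := ∀ u v, M.R u v → M.dom u ⊆ M.dom v
def KModel.decDom (M : KModel) : Prop := ∀ u v, M.R u v → M.dom v ⊆ M.dom u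

/-- Satisfiability with respect to QK (constant domains). -/
def satQK (φ : Fml) : Prop :=
  ∃ M : KModel, M.constDom ∧ ∃ w a, a ∈ M.dom w ∧ M.sat φ w a

/-- Satisfiability with respect to QK^exp (expanding domains). -/
def satQKexp (φ : Fml) : Prop :=
  ∃ M : KModel, M.expDom ∧ ∃ w a, a ∈ M.dom w ∧ M.sat φ w a

/-- Satisfiability with respect to QK^dec (decreasing domains). -/
def satQKdec (φ : Fml) : Prop :=
  ∃ M : KModel, M.decDom ∧ ∃ w a, a ∈ M.dom w ∧ M.sat φ w a

/-- `R` is the immediate-successor (parent–child) relation of a rooted irreflexive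
intransitive tree of depth ≤ m with root `r`. -/
def IsTreeOfDepth {W : Type} (R : W → W → Prop) (r : W) (m : ℕ) : Prop :=
  ∃ depth : W → ℕ,
    depth r = 0 ∧ (∀ w, depth w ≤ m) ∧
    (∀ u v, R u v → depth v = depth u + 1) ∧
    (∀ v, v ≠ r → ∃! u, R u v) ∧
    (∀ v, Relation.ReflTransGen R r v)

/-! Propositional bimodal formulas: `◇` (= ◇_h) and `◇U` (the second modality,
read as the universal modality ◇_u or as the vertical modality ◇_v). -/

inductive BFml : Type
  | var : ℕ → BFml
  | neg : BFml → BFml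
  | conj : BFml → BFml → BFml
  | dia : BFml → BFml
  | diaU : BFml → BFml
deriving DecidableEq

namespace BFml

/-- Subformulas. -/
def subf : BFml → Finset BFml
  | var n => {var n}
  | neg ψ => insert (neg ψ) ψ.subf
  | conj ψ χ => insert (conj ψ χ) (ψ.subf ∪ χ.subf)
  | dia ψ => insert (dia ψ) ψ.subf
  | diaU ψ => insert (diaU ψ) ψ.subf

/-- Modal depth. -/
def md : BFml → ℕ
  | var _ => 0
  | neg ψ => ψ.md
  | conj ψ χ => max ψ.md χ.md
  | dia ψ => ψ.md + 1
  | diaU ψ => ψ.md + 1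

end BFml

/-- Conjunction of a list of formulas. -/
def conjList : List Fml → Fml
  | [] => Fml.top
  | ψ :: rest => Fml.conj ψ (conjList rest)

/-- A model for the bimodal logic K_u: the second modality is the universal one. -/
structure KuModel where
  W : Type
  R : W → W → Prop
  V : ℕ → Set W

def KuModel.sat (M : KuModel) : BFml → M.W → Prop
  | .var p, w => w ∈ M.V p
  | .neg ψ, w => ¬ M.sat ψ w
  | .conj ψ χ, w => M.sat ψ w ∧ M.sat χ w
  | .dia ψ, w => ∃ v, M.R w v ∧ M.sat ψ v
  | .diaU ψ, _ => ∃ v, M.sat ψ v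

/-- Satisfiability with respect to K_u. -/
def satKu (φ : BFml) : Prop := ∃ (M : KuModel) (w : M.W), M.sat φ w

/-- The translation ·^†: `p_k^† = P_k(x)`, commuting with ¬ and ∧,
`(◇ψ)^† = ◇(S(x) ∧ ∃x(T(x) ∧ Q_ψ(x)))`, `(◇_uψ)^† = ∃x ψ^†`. -/
def transDag (P : ℕ → ℕ) (Q : BFml → ℕ) (S T : ℕ) : BFml → Fml
  | .var k => .atom (P k)
  | .neg ψ => .neg (transDag P Q S T ψ)
  | .conj ψ χ => .conj (transDag P Q S T ψ) (transDag P Q S T χ)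
  | .dia ψ => .dia (.conj (.atom S) (Fml.ex (.conj (.atom T) (.atom (Q ψ)))))
  | .diaU ψ => Fml.ex (transDag P Q S T ψ)

/-- `ζ := ⋀_{ψ∈sub(φ)} ∀x(ψ^† → □Q_ψ(x)) ∧ ⋀_{ψ∈sub(φ)} ∀x(◇Q_ψ(x) → ψ^†)`. -/
noncomputable def zeta11 (P : ℕ → ℕ) (Q : BFml → ℕ) (S T : ℕ) (φ : BFml) : Fml :=
  Fml.conj
    (conjList (φ.subf.toList.map fun ψ =>
      Fml.fal ((transDag P Q S T ψ).imp (Fml.box (Fml.atom (Q ψ))))))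
    (conjList (φ.subf.toList.map fun ψ =>
      Fml.fal ((Fml.dia (Fml.atom (Q ψ))).imp (transDag P Q S T ψ))))

section Helpers

lemma sat_neg (M : KModel) (ψ : Fml) (w : M.W) (a : M.D) :
    M.sat ψ.neg w a ↔ ¬ M.sat ψ w a := Iff.rfl

lemma sat_fal (M : KModel) (ψ : Fml) (w : M.W) (a : M.D) :
    M.sat (Fml.fal ψ) w a ↔ ∀ b ∈ M.dom w, M.sat ψ w b := by
  show {b | b ∈ M.dom w ∧ M.sat ψ.neg w b}.encard ≤ ((0 : ℕ) : ℕ∞) ↔ _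
  rw [Nat.cast_zero, nonpos_iff_eq_zero, Set.encard_eq_zero, Set.eq_empty_iff_forall_notMem]
  simp [KModel.sat]

lemma sat_ex (M : KModel) (ψ : Fml) (w : M.W) (a : M.D) :
    M.sat (Fml.ex ψ) w a ↔ ∃ b ∈ M.dom w, M.sat ψ w b := by
  show ¬ ({b | b ∈ M.dom w ∧ M.sat ψ w b}.encard ≤ ((0 : ℕ) : ℕ∞)) ↔ _
  rw [Nat.cast_zero, nonpos_iff_eq_zero, Set.encard_eq_zero]
  rw [← Ne, ← Set.nonempty_iff_ne_empty]
  exact ⟨fun ⟨b, hb⟩ => ⟨b, hb.1, hb.2⟩, fun ⟨b, h1, h2⟩ => ⟨b, h1, h2⟩⟩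

lemma sat_imp (M : KModel) (ψ χ : Fml) (w : M.W) (a : M.D) :
    M.sat (ψ.imp χ) w a ↔ (M.sat ψ w a → M.sat χ w a) := by
  simp only [Fml.imp, KModel.sat]; tauto

lemma sat_box (M : KModel) (ψ : Fml) (w : M.W) (a : M.D) :
    M.sat ψ.box w a ↔ ∀ v, M.R w v → M.sat ψ v a := by
  simp only [Fml.box, KModel.sat]; push_neg; rfl

lemma sat_conjList (M : KModel) (l : List Fml) (w : M.W) (a : M.D) :
    M.sat (conjList l) w a ↔ ∀ ψ ∈ l, M.sat ψ w a := by
  induction l with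
  | nil => simp [conjList, Fml.top, KModel.sat]
  | cons ψ rest ih => simp [conjList, KModel.sat, ih]

lemma mem_subf_self (ψ : BFml) : ψ ∈ ψ.subf := by
  cases ψ <;> simp [BFml.subf]

lemma subf_trans {χ ψ φ : BFml} (h1 : χ ∈ ψ.subf) (h2 : ψ ∈ φ.subf) : χ ∈ φ.subf := by
  induction φ with
  | var n => simp [BFml.subf] at h2; subst h2; simpa [BFml.subf] using h1
  | neg ψ' ih =>
      simp [BFml.subf] at h2 ⊢
      rcases h2 with h2 | h2
      · subst h2; simpa [BFml.subf] using h1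
      · exact Or.inr (ih h2)
  | conj ψ' χ' ih1 ih2 =>
      simp [BFml.subf] at h2 ⊢
      rcases h2 with h2 | h2 | h2
      · subst h2; simpa [BFml.subf] using h1
      · exact Or.inr (Or.inl (ih1 h2))
      · exact Or.inr (Or.inr (ih2 h2))
  | dia ψ' ih =>
      simp [BFml.subf] at h2 ⊢
      rcases h2 with h2 | h2
      · subst h2; simpa [BFml.subf] using h1
      · exact Or.inr (ih h2)
  | diaU ψ' ih =>
      simp [BFml.subf] at h2 ⊢
      rcases h2 with h2 | h2
      · subst h2; simpa [BFml.subf] using h1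
      · exact Or.inr (ih h2)

lemma neg_mem_subf {ψ φ : BFml} (h : BFml.neg ψ ∈ φ.subf) : ψ ∈ φ.subf :=
  subf_trans (by simp [BFml.subf, mem_subf_self]) h

lemma conj_mem_subf {ψ χ φ : BFml} (h : BFml.conj ψ χ ∈ φ.subf) :
    ψ ∈ φ.subf ∧ χ ∈ φ.subf :=
  ⟨subf_trans (by simp [BFml.subf, mem_subf_self]) h,
   subf_trans (by simp [BFml.subf, mem_subf_self]) h⟩

lemma dia_mem_subf {ψ φ : BFml} (h : BFml.dia ψ ∈ φ.subf) : ψ ∈ φ.subf :=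
  subf_trans (by simp [BFml.subf, mem_subf_self]) h

lemma diaU_mem_subf {ψ φ : BFml} (h : BFml.diaU ψ ∈ φ.subf) : ψ ∈ φ.subf :=
  subf_trans (by simp [BFml.subf, mem_subf_self]) h

section Forward

variable (M : KuModel) (P : ℕ → ℕ) (Q : BFml → ℕ) (S T : ℕ)

/-- Accessibility of the forward model: root `none`, a leaf for each edge. -/
def fwdR : Option (M.W × M.W) → Option (M.W × M.W) → Prop
  | none, some (x, y) => M.R x y
  | _, _ => False

/-- Interpretation of the forward model. -/
def fwdI : Option (M.W × M.W) → ℕ → Set M.W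
  | none, n => {a | ∃ k, n = P k ∧ a ∈ M.V k}
  | some (u, v), n =>
      {a | (n = S ∧ a = u) ∨ (n = T ∧ a = v) ∨ ∃ ψ, n = Q ψ ∧ M.sat ψ a}

/-- The forward QK^dec model. -/
def fwdModel (w₀ : M.W) : KModel where
  W := Option (M.W × M.W)
  R := fwdR M
  D := M.W
  Dne := ⟨w₀⟩
  dom _ := Set.univ
  domNe _ := ⟨w₀, trivial⟩
  I := fwdI M P Q S T
  Isub _ _ := Set.subset_univ _

lemma fwdI_leaf_S (hQS : ∀ ψ, Q ψ ≠ S) (hST : S ≠ T) (u v a : M.W) :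
    a ∈ fwdI M P Q S T (some (u, v)) S ↔ a = u := by
  show ((S = S ∧ a = u) ∨ (S = T ∧ a = v) ∨ ∃ ψ, S = Q ψ ∧ M.sat ψ a) ↔ a = u
  constructor
  · rintro (⟨-, h⟩ | ⟨h, -⟩ | ⟨ψ, h, -⟩)
    · exact h
    · exact absurd h hST
    · exact absurd h.symm (hQS ψ)
  · exact fun h => Or.inl ⟨rfl, h⟩

lemma fwdI_leaf_T (hQT : ∀ ψ, Q ψ ≠ T) (hST : S ≠ T) (u v a : M.W) :
    a ∈ fwdI M P Q S T (some (u, v)) T ↔ a = v := by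
  show ((T = S ∧ a = u) ∨ (T = T ∧ a = v) ∨ ∃ ψ, T = Q ψ ∧ M.sat ψ a) ↔ a = v
  constructor
  · rintro (⟨h, -⟩ | ⟨-, h⟩ | ⟨ψ, h, -⟩)
    · exact absurd h.symm hST
    · exact h
    · exact absurd h.symm (hQT ψ)
  · exact fun h => Or.inr (Or.inl ⟨rfl, h⟩)

lemma fwdI_leaf_Q (hQinj : Function.Injective Q) (hQS : ∀ ψ, Q ψ ≠ S)
    (hQT : ∀ ψ, Q ψ ≠ T) (u v a : M.W) (ψ : BFml) :
    a ∈ fwdI M P Q S T (some (u, v)) (Q ψ) ↔ M.sat ψ a := by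
  show ((Q ψ = S ∧ a = u) ∨ (Q ψ = T ∧ a = v) ∨ ∃ ψ', Q ψ = Q ψ' ∧ M.sat ψ' a) ↔
    M.sat ψ a
  constructor
  · rintro (⟨h, -⟩ | ⟨h, -⟩ | ⟨ψ', h, hs⟩)
    · exact absurd h (hQS ψ)
    · exact absurd h (hQT ψ)
    · rwa [hQinj h]
  · exact fun h => Or.inr (Or.inr ⟨ψ, rfl, h⟩)

lemma fwd_key (hPinj : Function.Injective P) (hQinj : Function.Injective Q)
    (hQS : ∀ ψ, Q ψ ≠ S) (hQT : ∀ ψ, Q ψ ≠ T) (hST : S ≠ T)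
    (w₀ : M.W) (ψ : BFml) (a : M.W) :
    (fwdModel M P Q S T w₀).sat (transDag P Q S T ψ) none a ↔ M.sat ψ a := by
  induction ψ generalizing a with
  | var k =>
      show (∃ k', P k = P k' ∧ a ∈ M.V k') ↔ a ∈ M.V k
      constructor
      · rintro ⟨k', h1, h2⟩; rwa [hPinj h1]
      · exact fun h => ⟨k, rfl, h⟩
  | neg ψ ih => exact not_congr (ih a)
  | conj ψ χ ih1 ih2 => exact and_congr (ih1 a) (ih2 a)
  | dia ψ ih =>
      show (∃ v, fwdR M none v ∧ _) ↔ (∃ v, M.R a v ∧ M.sat ψ v)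
      constructor
      · rintro ⟨v, hRv, hS, hex⟩
        erw [sat_ex] at hex
        obtain ⟨b, -, hT, hQ⟩ := hex
        rcases v with - | ⟨x, y⟩
        · exact absurd hRv (by simp [fwdR])
        · have hRxy : M.R x y := hRv
          have haS : a = x :=
            (fwdI_leaf_S M P Q S T hQS hST x y a).mp hS
          have hbT : b = y :=
            (fwdI_leaf_T M P Q S T hQT hST x y b).mp hT
          have hbQ : M.sat ψ b :=
            (fwdI_leaf_Q M P Q S T hQinj hQS hQT x y b ψ).mp hQ
          exact ⟨y, haS ▸ hRxy, hbT ▸ hbQ⟩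
      · rintro ⟨v, hRv, hψ⟩
        refine ⟨some (a, v), hRv, ?_, ?_⟩
        · exact (fwdI_leaf_S M P Q S T hQS hST a v a).mpr rfl
        · erw [sat_ex]
          exact ⟨v, trivial,
            (fwdI_leaf_T M P Q S T hQT hST a v v).mpr rfl,
            (fwdI_leaf_Q M P Q S T hQinj hQS hQT a v v ψ).mpr hψ⟩
  | diaU ψ ih =>
      simp only [transDag]
      erw [sat_ex]
      show (∃ b ∈ (Set.univ : Set M.W), _) ↔ (∃ b, M.sat ψ b)
      constructor
      · rintro ⟨b, -, hb⟩; exact ⟨b, (ih b).mp hb⟩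
      · rintro ⟨b, hb⟩; exact ⟨b, trivial, (ih b).mpr hb⟩

end Forward

section Backward

/-- The backward K_u model extracted from a QK^dec model. -/
def bwdModel (N : KModel) (P : ℕ → ℕ) (S T : ℕ) (w₀ : N.W) : KuModel where
  W := {a : N.D // a ∈ N.dom w₀}
  R a b := ∃ v, N.R w₀ v ∧ a.1 ∈ N.I v S ∧ b.1 ∈ N.I v T
  V k := {a | a.1 ∈ N.I w₀ (P k)}

lemma bwd_key (N : KModel) (hdec : N.decDom) (P : ℕ → ℕ) (Q : BFml → ℕ) (S T : ℕ)
    (φ : BFml) (w₀ : N.W)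
    (hz1 : ∀ ψ ∈ φ.subf, ∀ b ∈ N.dom w₀, N.sat (transDag P Q S T ψ) w₀ b →
      ∀ v, N.R w₀ v → b ∈ N.I v (Q ψ))
    (hz2 : ∀ ψ ∈ φ.subf, ∀ b ∈ N.dom w₀, (∃ v, N.R w₀ v ∧ b ∈ N.I v (Q ψ)) →
      N.sat (transDag P Q S T ψ) w₀ b) :
    ∀ ψ ∈ φ.subf, ∀ a : (bwdModel N P S T w₀).W,
      (bwdModel N P S T w₀).sat ψ a ↔ N.sat (transDag P Q S T ψ) w₀ a.1 := by
  intro ψ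
  induction ψ with
  | var k => exact fun _ a => Iff.rfl
  | neg ψ ih => exact fun h a => not_congr (ih (neg_mem_subf h) a)
  | conj ψ χ ih1 ih2 =>
      exact fun h a =>
        and_congr (ih1 (conj_mem_subf h).1 a) (ih2 (conj_mem_subf h).2 a)
  | dia ψ ih =>
      intro h a
      have hψ : ψ ∈ φ.subf := dia_mem_subf h
      show (∃ b : (bwdModel N P S T w₀).W, (bwdModel N P S T w₀).R a b ∧ _) ↔
        (∃ v, N.R w₀ v ∧ (a.1 ∈ N.I v S ∧ N.sat _ v a.1))
      constructor
      · rintro ⟨b, ⟨v, hv, haS, hbT⟩, hsatb⟩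
        have hbN : N.sat (transDag P Q S T ψ) w₀ b.1 := (ih hψ b).mp hsatb
        have hbQ : b.1 ∈ N.I v (Q ψ) := hz1 ψ hψ b.1 b.2 hbN v hv
        refine ⟨v, hv, haS, ?_⟩
        rw [sat_ex]
        exact ⟨b.1, N.Isub v T hbT, hbT, hbQ⟩
      · rintro ⟨v, hv, haS, hex⟩
        rw [sat_ex] at hex
        obtain ⟨b, hbv, hbT, hbQ⟩ := hex
        have hbw : b ∈ N.dom w₀ := hdec w₀ v hv hbv
        have hbN : N.sat (transDag P Q S T ψ) w₀ b :=
          hz2 ψ hψ b hbw ⟨v, hv, hbQ⟩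
        exact ⟨⟨b, hbw⟩, ⟨v, hv, haS, hbT⟩, (ih hψ ⟨b, hbw⟩).mpr hbN⟩
  | diaU ψ ih =>
      intro h a
      have hψ : ψ ∈ φ.subf := diaU_mem_subf h
      show (∃ b : (bwdModel N P S T w₀).W, _) ↔ _
      simp only [transDag]
      rw [sat_ex]
      constructor
      · rintro ⟨b, hb⟩; exact ⟨b.1, b.2, (ih hψ b).mp hb⟩
      · rintro ⟨b, hbw, hb⟩; exact ⟨⟨b, hbw⟩, (ih hψ ⟨b, hbw⟩).mpr hb⟩

end Backward

end Helpers

/-- with P_k, S, T, Q_ψ pairwise distinct fresh unary predicates,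
φ is satisfiable with respect to K_u iff `ζ ∧ φ^†` is satisfiable with respect to
QK^dec. -/
theorem stmt_11 (φ : BFml) (P : ℕ → ℕ) (Q : BFml → ℕ) (S T : ℕ)
    (hPinj : Function.Injective P) (hQinj : Function.Injective Q)
    (hPQ : ∀ k ψ, P k ≠ Q ψ) (hPS : ∀ k, P k ≠ S) (hPT : ∀ k, P k ≠ T)
    (hQS : ∀ ψ, Q ψ ≠ S) (hQT : ∀ ψ, Q ψ ≠ T) (hST : S ≠ T) :
    satKu φ ↔ satQKdec (Fml.conj (zeta11 P Q S T φ) (transDag P Q S T φ)) := by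
  constructor
  · rintro ⟨M, w₀, hw₀⟩
    refine ⟨fwdModel M P Q S T w₀, fun u v _ => subset_rfl, none, w₀, trivial, ?_, ?_⟩
    · simp only [zeta11]
      refine ⟨?_, ?_⟩
      · erw [sat_conjList]
        intro χ hχ
        rw [List.mem_map] at hχ
        obtain ⟨ψ, hψ, rfl⟩ := hχ
        erw [sat_fal]
        intro b hb
        erw [sat_imp]
        intro hsb
        erw [sat_box]
        intro v hv
        rcases v with - | ⟨x, y⟩
        · exact hv.elim
        · show b ∈ fwdI M P Q S T (some (x, y)) (Q ψ)
          erw [fwdI_leaf_Q M P Q S T hQinj hQS hQT]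
          exact (fwd_key M P Q S T hPinj hQinj hQS hQT hST w₀ ψ b).mp hsb
      · erw [sat_conjList]
        intro χ hχ
        rw [List.mem_map] at hχ
        obtain ⟨ψ, hψ, rfl⟩ := hχ
        erw [sat_fal]
        intro b hb
        erw [sat_imp]
        rintro ⟨v, hv, hbQ⟩
        rcases v with - | ⟨x, y⟩
        · exact hv.elim
        · have hb' : M.sat ψ b :=
            (fwdI_leaf_Q M P Q S T hQinj hQS hQT x y b ψ).mp hbQ
          exact (fwd_key M P Q S T hPinj hQinj hQS hQT hST w₀ ψ b).mpr hb'
    · exact (fwd_key M P Q S T hPinj hQinj hQS hQT hST w₀ φ w₀).mpr hw₀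
  · rintro ⟨N, hdec, w₀, a₀, ha₀, hsat⟩
    obtain ⟨hζ, hφ⟩ := hsat
    simp only [zeta11] at hζ
    obtain ⟨hζ1, hζ2⟩ := hζ
    rw [sat_conjList] at hζ1 hζ2
    have hz1 : ∀ ψ ∈ φ.subf, ∀ b ∈ N.dom w₀, N.sat (transDag P Q S T ψ) w₀ b →
        ∀ v, N.R w₀ v → b ∈ N.I v (Q ψ) := by
      intro ψ hψ b hb hsb v hv
      have h1 := hζ1 _ (List.mem_map.mpr ⟨ψ, Finset.mem_toList.mpr hψ, rfl⟩)
      rw [sat_fal] at h1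
      have h2 := h1 b hb
      rw [sat_imp] at h2
      have h3 := h2 hsb
      rw [sat_box] at h3
      exact h3 v hv
    have hz2 : ∀ ψ ∈ φ.subf, ∀ b ∈ N.dom w₀, (∃ v, N.R w₀ v ∧ b ∈ N.I v (Q ψ)) →
        N.sat (transDag P Q S T ψ) w₀ b := by
      intro ψ hψ b hb hex
      have h1 := hζ2 _ (List.mem_map.mpr ⟨ψ, Finset.mem_toList.mpr hψ, rfl⟩)
      rw [sat_fal] at h1
      have h2 := h1 b hb
      rw [sat_imp] at h2
      exact h2 hex
    exact ⟨bwdModel N P S T w₀, ⟨a₀, ha₀⟩,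
      (bwd_key N hdec P Q S T φ w₀ hz1 hz2 φ (mem_subf_self φ) ⟨a₀, ha₀⟩).mpr hφ⟩
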